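/- Let C be a cycle of goods and N = {1,2,3} a set of three agents, 0 < c ≤ 1. If for two different agents i and j, the intersection of a bundle of an mms-split of i and a bundle of an mms-split of j has value at least c·mms(i) for agent i, then there exists a c-sufficient allocation of goods on C among the three agents. -/

import Mathlib

open scoped BigOperators

noncomputable section

/-- Total value of a bundle under an additive utility. -/
def bval {V : Type*} [DecidableEq V] (u : V → ℝ) (S : Finset V) : ℝ := ∑ v ∈ S, u v

/-- A `G`-bundle: a (possibly empty) set of vertices inducing a connected subgraph. -/
def IsBundle {V : Type*} (G : SimpleGraph V) (S : Finset V) : Prop :=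
  (S : Set V) = ∅ ∨ (G.induce (S : Set V)).Connected

/-- A split of the vertex set `A` into `n` pairwise disjoint `G`-bundles covering `A`. -/
def IsSplitOn {V : Type*} [DecidableEq V] (G : SimpleGraph V) (A : Finset V) (n : ℕ)
    (P : Fin n → Finset V) : Prop :=
  (∀ i, IsBundle G (P i)) ∧ (∀ i j, i ≠ j → Disjoint (P i) (P j)) ∧
  (∀ i, P i ⊆ A) ∧ (∀ v ∈ A, ∃ i, v ∈ P i)

/-- The maximin share over splits of `A` into `n` `G`-bundles. -/
def mmsOn {V : Type*} [DecidableEq V] (G : SimpleGraph V) (A : Finset V)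
    (n : ℕ) (u : V → ℝ) : ℝ :=
  sSup {q : ℝ | ∃ P : Fin n → Finset V, IsSplitOn G A n P ∧ ∀ i, q ≤ bval u (P i)}

/-- The maximin share `mms^(n)(G,u)`. -/
def mms {V : Type*} [DecidableEq V] [Fintype V] (G : SimpleGraph V)
    (n : ℕ) (u : V → ℝ) : ℝ := mmsOn G Finset.univ n u

/-- The cycle on `m` vertices, identified with `ZMod m`. -/
def cycleGraph (m : ℕ) : SimpleGraph (ZMod m) :=
  SimpleGraph.fromRel (fun v w => w = v + 1)

end


set_option linter.unusedSectionVars false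
set_option linter.unusedVariables false
set_option maxHeartbeats 1600000

namespace Stmt12

variable {m : ℕ} [NeZero m]

/-! ### arcs -/

def arc (v : ZMod m) (n : ℕ) : Finset (ZMod m) :=
  (Finset.range n).image (fun (k : ℕ) => v + (k : ZMod m))

lemma mem_arc {v w : ZMod m} {n : ℕ} (hn : n ≤ m) :
    w ∈ arc v n ↔ (w - v).val < n := by
  constructor
  · rintro h
    simp only [arc, Finset.mem_image, Finset.mem_range] at h
    obtain ⟨k, hk, rfl⟩ := h
    have : (v + (k:ZMod m) - v) = (k : ZMod m) := by ring
    rw [this, ZMod.val_cast_of_lt (lt_of_lt_of_le hk hn)]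
    exact hk
  · intro h
    simp only [arc, Finset.mem_image, Finset.mem_range]
    refine ⟨(w - v).val, h, ?_⟩
    rw [ZMod.natCast_val, ZMod.cast_id]
    ring

lemma val_sub_nat (x : ZMod m) (s : ℕ) (hs : s ≤ m) :
    (x - (s : ZMod m)).val = if s ≤ x.val then x.val - s else x.val + m - s := by
  have hx : ((x.val : ℕ) : ZMod m) = x := by rw [ZMod.natCast_val, ZMod.cast_id]
  have hmlt : x.val < m := ZMod.val_lt x
  have key : x - (s:ZMod m) = ((x.val + m - s : ℕ) : ZMod m) := by
    have : ((x.val + m - s : ℕ) : ZMod m) = ((x.val + m : ℕ) : ZMod m) - (s:ZMod m) := by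
      have h1 : s ≤ x.val + m := by omega
      push_cast [Nat.cast_sub h1]
      ring
    rw [this]
    push_cast
    rw [ZMod.natCast_self]
    rw [hx]
    ring
  rw [key, ZMod.val_natCast]
  rcases le_or_gt s x.val with h | h
  · rw [if_pos h]
    have : x.val + m - s = (x.val - s) + m := by omega
    rw [this, Nat.add_mod_right, Nat.mod_eq_of_lt (by omega)]
  · rw [if_neg (not_le.mpr h), Nat.mod_eq_of_lt (by omega)]

lemma ne_add_one (hm : 3 ≤ m) (x : ZMod m) : x ≠ x + 1 := by
  intro h
  have h1 : (1 : ZMod m) = 0 := by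
    have := h.symm
    rwa [add_eq_left] at this
  have : (1 : ZMod m).val = 1 := by
    haveI : Fact (1 < m) := ⟨by omega⟩
    exact ZMod.val_one m
  rw [h1] at this
  simp [ZMod.val_zero] at this

lemma induce_adj {x y : ZMod m} {s : Set (ZMod m)} (hx : x ∈ s) (hy : y ∈ s) :
    ((cycleGraph m).induce s).Adj ⟨x,hx⟩ ⟨y,hy⟩ ↔ (x ≠ y ∧ (y = x + 1 ∨ x = y + 1)) := by
  simp [cycleGraph]

lemma arc_bundle (hm : 3 ≤ m) (v : ZMod m) (n : ℕ) (hnm : n ≤ m) :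
    IsBundle (cycleGraph m) (arc v n) := by
  rcases Nat.eq_zero_or_pos n with rfl | hn
  · left; simp [arc]
  right
  have hv : v ∈ (arc v n : Set (ZMod m)) := by
    simp only [Finset.coe_sort_coe, Finset.mem_coe]
    rw [mem_arc hnm]; simp [hn]
  have hmemk : ∀ k : ℕ, k < n → (v + (k:ZMod m)) ∈ (arc v n : Set (ZMod m)) := by
    intro k hk
    simp only [Finset.mem_coe]
    rw [mem_arc hnm]
    have : (v + (k:ZMod m) - v) = (k : ZMod m) := by ring
    rw [this, ZMod.val_cast_of_lt (by omega)]
    exact hk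
  have reach : ∀ k : ℕ, ∀ hk : k < n,
      ((cycleGraph m).induce (arc v n : Set (ZMod m))).Reachable ⟨v, hv⟩ ⟨v + (k:ZMod m), hmemk k hk⟩ := by
    intro k
    induction k with
    | zero =>
      intro hk
      have : (⟨v, hv⟩ : (arc v n : Set (ZMod m))) = ⟨v + ((0:ℕ):ZMod m), hmemk 0 hk⟩ := by
        apply Subtype.ext; simp
      rw [this]
    | succ k ih =>
      intro hk
      have hk' : k < n := by omega
      refine (ih hk').trans ?_
      have hadj : ((cycleGraph m).induce (arc v n : Set (ZMod m))).Adj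
          ⟨v + (k:ZMod m), hmemk k hk'⟩ ⟨v + ((k+1 : ℕ):ZMod m), hmemk (k+1) hk⟩ := by
        rw [induce_adj]
        constructor
        · push_cast
          rw [← add_assoc]
          exact ne_add_one hm _
        · left; push_cast; ring
      exact hadj.reachable
  rw [SimpleGraph.connected_iff]
  constructor
  · intro x y
    have hx := x.2
    have hy := y.2
    simp only [Finset.coe_sort_coe, Finset.mem_coe] at hx hy
    have hx' := (mem_arc hnm).1 hx
    have hy' := (mem_arc hnm).1 hy
    have ex : x = ⟨v + (((x.1 - v).val : ℕ) : ZMod m), hmemk _ hx'⟩ := by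
      apply Subtype.ext
      simp only
      rw [ZMod.natCast_val, ZMod.cast_id]; ring
    have ey : y = ⟨v + (((y.1 - v).val : ℕ) : ZMod m), hmemk _ hy'⟩ := by
      apply Subtype.ext
      simp only
      rw [ZMod.natCast_val, ZMod.cast_id]; ring
    rw [ex, ey]
    exact (reach _ hx').symm.trans (reach _ hy')
  · exact ⟨⟨v, hv⟩⟩

lemma bundle_to_arc (S : Finset (ZMod m)) (hS : IsBundle (cycleGraph m) S)
    (hne : S.Nonempty) : ∃ (v : ZMod m) (n : ℕ), 1 ≤ n ∧ n ≤ m ∧ S = arc v n := by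
  by_cases huniv : S = Finset.univ
  · refine ⟨0, m, NeZero.one_le, le_rfl, ?_⟩
    rw [huniv]
    ext w
    simp only [Finset.mem_univ, true_iff]
    rw [mem_arc le_rfl]
    exact ZMod.val_lt _
  obtain ⟨x, hx⟩ : ∃ x, x ∉ S := by
    by_contra h
    push_neg at h
    exact huniv (Finset.eq_univ_iff_forall.2 h)
  obtain ⟨v, hvS, hvmin⟩ := S.exists_min_image (fun s => (s - x).val) hne
  have hSne : (S : Set (ZMod m)) ≠ ∅ := by
    simp only [ne_eq, Finset.coe_eq_empty]
    exact fun h => by simp [h] at hvS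
  have hconn : ((cycleGraph m).induce (S : Set (ZMod m))).Connected := by
    rcases hS with h | h
    · exact absurd h hSne
    · exact h
  have hm2 : 2 ≤ m := by
    by_contra h
    interval_cases m
    · exact absurd rfl (NeZero.ne 0)
    · exact hx (by have : x = v := Subsingleton.elim x v; rw [this]; exact hvS)
  have hv1 : v - 1 ∉ S := by
    intro h
    have hvx : v ≠ x := fun h' => hx (h' ▸ hvS)
    have hval1 : 1 ≤ (v - x).val := by
      rcases Nat.eq_zero_or_pos (v - x).val with h0 | h0
      · exfalso
        apply hvx
        have : v - x = 0 := by
          rw [← ZMod.val_eq_zero]; exact h0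
        exact sub_eq_zero.mp this
      · exact h0
    have : (v - 1 - x).val = (v - x).val - 1 := by
      have e : v - 1 - x = (v - x) - ((1:ℕ) : ZMod m) := by push_cast; ring
      rw [e, val_sub_nat _ 1 (by omega), if_pos hval1]
    have := hvmin _ h
    omega
  have hex : ∃ k : ℕ, v + (k : ZMod m) ∉ S := by
    refine ⟨(x - v).val, ?_⟩
    rw [ZMod.natCast_val, ZMod.cast_id]
    simpa using hx
  classical
  have hrnot := Nat.find_spec hex
  have hrS : ∀ k : ℕ, k < Nat.find hex → v + (k : ZMod m) ∈ S := by
    intro k hk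
    have := Nat.find_min hex hk
    simpa using this
  set r := Nat.find hex with hrdef
  have hr0 : 0 < r := by
    rcases Nat.eq_zero_or_pos r with h | h
    · exfalso; apply hrnot; rw [h]; simpa using hvS
    · exact h
  have hrm : r < m := by
    by_contra h
    push_neg at h
    apply hx
    have : x = v + (((x - v).val : ℕ) : ZMod m) := by
      rw [ZMod.natCast_val, ZMod.cast_id]; ring
    rw [this]
    exact hrS _ (lt_of_lt_of_le (ZMod.val_lt _) h)
  refine ⟨v, r, hr0, le_of_lt hrm, ?_⟩
  apply Finset.Subset.antisymm
  · have closure : ∀ y z : ZMod m, y ∈ arc v r → z ∈ S →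
        (cycleGraph m).Adj y z → z ∈ arc v r := by
      intro y z hy hz hadj
      rw [mem_arc (le_of_lt hrm)] at hy ⊢
      set k := (y - v).val with hkdef
      have hyk : y = v + (k : ZMod m) := by
        rw [hkdef, ZMod.natCast_val, ZMod.cast_id]; ring
      rw [cycleGraph, SimpleGraph.fromRel_adj] at hadj
      obtain ⟨hne', hor⟩ := hadj
      rcases hor with h1 | h1
      · have hz' : z = v + ((k+1 : ℕ) : ZMod m) := by rw [h1, hyk]; push_cast; ring
        have hk1 : k + 1 < m := by omega
        have : (z - v).val = k + 1 := by
          rw [hz']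
          have : v + ((k+1 : ℕ) : ZMod m) - v = ((k+1:ℕ) : ZMod m) := by ring
          rw [this, ZMod.val_cast_of_lt hk1]
        rw [this]
        rcases Nat.lt_or_ge (k+1) r with h | h
        · exact h
        · exfalso
          have : k + 1 = r := by omega
          rw [← this] at hrnot
          exact hrnot (hz' ▸ hz)
      · have hz' : z = y - 1 := by rw [h1]; ring
        rcases Nat.eq_zero_or_pos k with hk0 | hk0
        · exfalso
          have hyv : y = v := by
            rw [hyk, hk0]; simp
          apply hv1
          rw [← hyv, ← hz']
          exact hz
        · have hz'' : z = v + ((k-1 : ℕ) : ZMod m) := by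
            rw [hz', hyk]
            have : ((k : ℕ) : ZMod m) = ((k-1:ℕ) : ZMod m) + 1 := by
              have : k = (k-1) + 1 := by omega
              rw [this]; push_cast; ring
            rw [this]; ring
          have : (z - v).val = k - 1 := by
            rw [hz'']
            have e : v + ((k-1 : ℕ) : ZMod m) - v = ((k-1:ℕ) : ZMod m) := by ring
            rw [e, ZMod.val_cast_of_lt (by omega)]
          omega
    have walkind : ∀ (y w : (S : Set (ZMod m)))
        (p : ((cycleGraph m).induce (S : Set (ZMod m))).Walk y w),
        y.val ∈ arc v r → w.val ∈ arc v r := by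
      intro y w p
      induction p with
      | nil => exact id
      | @cons a b c hadj p ih =>
        intro hy
        apply ih
        have hadj' : (cycleGraph m).Adj a.val b.val := hadj
        exact closure a.val b.val hy (by simpa using b.2) hadj'
    intro w hw
    have hvS' : v ∈ (S : Set (ZMod m)) := by simpa using hvS
    have hwS' : w ∈ (S : Set (ZMod m)) := by simpa using hw
    obtain ⟨p⟩ := hconn.preconnected ⟨v, hvS'⟩ ⟨w, hwS'⟩
    have hvT : v ∈ arc v r := by
      rw [mem_arc (le_of_lt hrm)]
      simpa using hr0
    exact walkind _ _ p hvT
  · intro w hw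
    rw [mem_arc (le_of_lt hrm)] at hw
    have : w = v + (((w - v).val : ℕ) : ZMod m) := by
      rw [ZMod.natCast_val, ZMod.cast_id]; ring
    rw [this]
    exact hrS _ hw

/-! ### subarc and prefix/suffix structure -/

lemma self_mem_arc {v : ZMod m} {n : ℕ} (h1 : 1 ≤ n) (h2 : n ≤ m) : v ∈ arc v n := by
  rw [mem_arc h2, sub_self, ZMod.val_zero]; omega

lemma subarc {w v : ZMod m} {l p : ℕ} (hsub : arc w l ⊆ arc v p) (hl : 1 ≤ l) (hlm : l ≤ m)
    (hp : p < m) : (w - v).val + l ≤ p ∧ w = v + (((w - v).val : ℕ) : ZMod m) := by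
  have hwv : w = v + (((w - v).val : ℕ) : ZMod m) := by
    rw [ZMod.natCast_val, ZMod.cast_id]; ring
  set o := (w - v).val with hodef
  have hop : o < p := by
    have := hsub (self_mem_arc hl (by omega))
    rwa [mem_arc (by omega)] at this
  refine ⟨?_, hwv⟩
  by_contra hcon
  push_neg at hcon
  rcases le_or_gt (o + l) m with hcase | hcase
  · have hmem : w + ((l-1 : ℕ) : ZMod m) ∈ arc w l := by
      rw [mem_arc (by omega)]
      have : w + ((l-1 : ℕ) : ZMod m) - w = ((l-1:ℕ) : ZMod m) := by ring
      rw [this, ZMod.val_cast_of_lt (by omega)]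
      omega
    have := hsub hmem
    rw [mem_arc (by omega)] at this
    have he : w + ((l-1 : ℕ) : ZMod m) - v = ((o + (l-1) : ℕ) : ZMod m) := by
      rw [hwv]; push_cast; ring
    rw [he, ZMod.val_cast_of_lt (by omega)] at this
    omega
  · have hmem : w + ((m-1-o : ℕ) : ZMod m) ∈ arc w l := by
      rw [mem_arc (by omega)]
      have : w + ((m-1-o : ℕ) : ZMod m) - w = ((m-1-o:ℕ) : ZMod m) := by ring
      rw [this, ZMod.val_cast_of_lt (by omega)]
      omega
    have := hsub hmem
    rw [mem_arc (by omega)] at this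
    have he : w + ((m-1-o : ℕ) : ZMod m) - v = ((m-1 : ℕ) : ZMod m) := by
      rw [hwv]
      have : ((o:ℕ) : ZMod m) + ((m-1-o : ℕ) : ZMod m) = ((m-1 : ℕ) : ZMod m) := by
        rw [← Nat.cast_add]
        congr 1
        omega
      push_cast at this ⊢
      linear_combination this
    rw [he, ZMod.val_cast_of_lt (by omega)] at this
    omega

lemma ps_aux (hm : 3 ≤ m) {d : ZMod m} {p : ℕ} (hp : p < m) {S T : Finset (ZMod m)}
    (hS : IsBundle (cycleGraph m) S) (hSne : S.Nonempty) (hTne : T.Nonempty)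
    (hdisj : Disjoint S T) (hcover : S ∪ T = arc d p) (hdS : d ∈ S) :
    ∃ q, 1 ≤ q ∧ q + 1 ≤ p ∧ S = arc d q ∧ T = arc (d + (q : ZMod m)) (p - q) := by
  obtain ⟨vs, ls, hls1, hlsm, rfl⟩ := bundle_to_arc S hS hSne
  have hsub : arc vs ls ⊆ arc d p := by
    rw [← hcover] at *; exact Finset.subset_union_left
  obtain ⟨ho, hvs⟩ := subarc hsub hls1 hlsm hp
  set o := (vs - d).val with hodef
  have ho0 : o = 0 := by
    rcases Nat.eq_zero_or_pos o with h | h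
    · exact h
    · exfalso
      have hd := (mem_arc (by omega)).1 hdS
      have e1 : ((m - o : ℕ) : ZMod m) = - ((o:ℕ) : ZMod m) := by
        have h2 : ((m - o : ℕ) : ZMod m) + ((o:ℕ):ZMod m) = ((m:ℕ):ZMod m) := by
          rw [← Nat.cast_add]; congr 1; omega
        rw [ZMod.natCast_self] at h2
        exact eq_neg_of_add_eq_zero_left h2
      have : d - vs = ((m - o : ℕ) : ZMod m) := by
        rw [hvs, e1]; ring
      rw [this, ZMod.val_cast_of_lt (by omega)] at hd
      omega
  have hSeq : vs = d := by
    rw [hvs, ho0]; simp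
  subst hSeq
  refine ⟨ls, hls1, ?_, rfl, ?_⟩
  · obtain ⟨w, hw⟩ := hTne
    have hwp : w ∈ arc vs p := by rw [← hcover]; exact Finset.mem_union_right _ hw
    have hwS : w ∉ arc vs ls := fun h => (Finset.disjoint_left.1 hdisj h) hw
    rw [mem_arc (by omega)] at hwp
    rw [mem_arc (by omega)] at hwS
    omega
  · ext w
    have hmemT : w ∈ T ↔ (w ∈ arc vs p ∧ w ∉ arc vs ls) := by
      constructor
      · intro hw
        exact ⟨by rw [← hcover]; exact Finset.mem_union_right _ hw,
          fun h => (Finset.disjoint_left.1 hdisj h) hw⟩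
      · rintro ⟨h1, h2⟩
        rw [← hcover] at h1
        rcases Finset.mem_union.1 h1 with h | h
        · exact absurd h h2
        · exact h
    rw [hmemT, mem_arc (le_of_lt hp), mem_arc (by omega), mem_arc (by omega)]
    have : w - (vs + (ls : ZMod m)) = (w - vs) - (ls : ZMod m) := by ring
    rw [this, val_sub_nat _ ls (by omega)]
    have := ZMod.val_lt (w - vs)
    split <;> omega

lemma ps (hm : 3 ≤ m) {d : ZMod m} {p : ℕ} (hp : p < m) {S T : Finset (ZMod m)}
    (hS : IsBundle (cycleGraph m) S) (hT : IsBundle (cycleGraph m) T)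
    (hSne : S.Nonempty) (hTne : T.Nonempty)
    (hdisj : Disjoint S T) (hcover : S ∪ T = arc d p) :
    ∃ q, 1 ≤ q ∧ q + 1 ≤ p ∧
      ((S = arc d q ∧ T = arc (d + (q : ZMod m)) (p - q)) ∨
       (T = arc d q ∧ S = arc (d + (q : ZMod m)) (p - q))) := by
  have hp0 : 0 < p := by
    obtain ⟨w, hw⟩ := hSne
    have : w ∈ arc d p := by rw [← hcover]; exact Finset.mem_union_left _ hw
    rw [mem_arc (by omega)] at this
    omega
  have hd : d ∈ S ∪ T := by rw [hcover]; exact self_mem_arc hp0 (by omega)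
  rcases Finset.mem_union.1 hd with h | h
  · obtain ⟨q, h1, h2, h3, h4⟩ := ps_aux hm hp hS hSne hTne hdisj hcover h
    exact ⟨q, h1, h2, Or.inl ⟨h3, h4⟩⟩
  · obtain ⟨q, h1, h2, h3, h4⟩ := ps_aux hm hp hT hTne hSne hdisj.symm
      (by rw [Finset.union_comm]; exact hcover) h
    exact ⟨q, h1, h2, Or.inr ⟨h3, h4⟩⟩

/-! ### segments -/

def seg (a : ZMod m) (s t : ℕ) : Finset (ZMod m) :=
  Finset.univ.filter (fun w => s ≤ (w - a).val ∧ (w - a).val < t)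

lemma mem_seg {a w : ZMod m} {s t : ℕ} :
    w ∈ seg a s t ↔ (s ≤ (w - a).val ∧ (w - a).val < t) := by
  simp [seg]

lemma seg_eq_arc {a : ZMod m} {s t : ℕ} (hst : s ≤ t) (ht : t ≤ m) :
    seg a s t = arc (a + (s:ZMod m)) (t - s) := by
  ext w
  rw [mem_seg, mem_arc (by omega)]
  have : w - (a + (s:ZMod m)) = (w - a) - (s : ZMod m) := by ring
  rw [this, val_sub_nat _ s (by omega)]
  have := ZMod.val_lt (w - a)
  split <;> omega

lemma compl_seg_eq_arc {a : ZMod m} {s t : ℕ} (hst : s ≤ t) (ht : t ≤ m) :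
    (seg a s t)ᶜ = arc (a + (t:ZMod m)) (m - t + s) := by
  ext w
  rw [Finset.mem_compl, mem_seg, mem_arc (by omega)]
  have : w - (a + (t:ZMod m)) = (w - a) - (t : ZMod m) := by ring
  rw [this, val_sub_nat _ t ht]
  have := ZMod.val_lt (w - a)
  split <;> omega

lemma arc_eq_seg {a : ZMod m} {n : ℕ} (hn : n ≤ m) : arc a n = seg a 0 n := by
  rw [seg_eq_arc (by omega) hn]
  simp

lemma arc_as_seg (a : ZMod m) {s l : ℕ} (h : s + l ≤ m) :
    arc (a + (s : ZMod m)) l = seg a s (s + l) := by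
  rw [seg_eq_arc (by omega) h]
  congr 1
  omega

lemma arc_as_compl (a : ZMod m) {s l : ℕ} (hs : s ≤ m) (hl : l ≤ m) (h : m ≤ s + l) :
    arc (a + (s : ZMod m)) l = (seg a (s + l - m) s)ᶜ := by
  rw [compl_seg_eq_arc (by omega) hs]
  congr 1
  omega

lemma seg_subset' {a : ZMod m} {s t s' t' : ℕ} (h1 : s' ≤ s) (h2 : t ≤ t') :
    seg a s t ⊆ seg a s' t' := by
  intro w hw; rw [mem_seg] at *; omega

lemma compl_seg_zero_subset {a : ZMod m} {t s' : ℕ} (h : s' ≤ t) :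
    (seg a 0 t)ᶜ ⊆ seg a s' m := by
  intro w hw
  rw [Finset.mem_compl, mem_seg] at hw
  rw [mem_seg]
  have := ZMod.val_lt (w - a)
  omega

lemma seg_empty' {a : ZMod m} {s t : ℕ} (h : t ≤ s) : seg a s t = ∅ := by
  ext w; simp only [mem_seg, Finset.notMem_empty, iff_false]; omega

/-! ### bval and mms facts -/

lemma bval_nonneg {V : Type*} [DecidableEq V] {u : V → ℝ} (hu : ∀ v, 0 ≤ u v)
    (S : Finset V) : 0 ≤ bval u S :=
  Finset.sum_nonneg (fun v _ => hu v)

lemma bval_mono {V : Type*} [DecidableEq V] {u : V → ℝ} (hu : ∀ v, 0 ≤ u v)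
    {S T : Finset V} (h : S ⊆ T) : bval u S ≤ bval u T :=
  Finset.sum_le_sum_of_subset_of_nonneg h (fun v _ _ => hu v)

lemma bval_union {V : Type*} [DecidableEq V] {u : V → ℝ} {S T : Finset V} (h : Disjoint S T) :
    bval u (S ∪ T) = bval u S + bval u T :=
  Finset.sum_union h

lemma bval_empty {V : Type*} [DecidableEq V] {u : V → ℝ} : bval u (∅ : Finset V) = 0 := rfl

lemma nonempty_of_bval_pos {V : Type*} [DecidableEq V] {u : V → ℝ} {S : Finset V}
    (h : 0 < bval u S) : S.Nonempty := by
  by_contra hc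
  rw [Finset.not_nonempty_iff_eq_empty] at hc
  rw [hc, bval_empty] at h
  exact lt_irrefl _ h

lemma seg_add_seg {a : ZMod m} {s t u : ℕ} (h1 : s ≤ t) (h2 : t ≤ u) {f : ZMod m → ℝ} :
    bval f (seg a s u) = bval f (seg a s t) + bval f (seg a t u) := by
  have hdisj : Disjoint (seg a s t) (seg a t u) := by
    rw [Finset.disjoint_left]
    intro w hw hw'
    rw [mem_seg] at hw hw'
    omega
  rw [← bval_union hdisj]
  congr 1
  ext w; simp only [Finset.mem_union, mem_seg]; omega

lemma bval_univ_split {a : ZMod m} {s t : ℕ} {f : ZMod m → ℝ} :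
    bval f (Finset.univ : Finset (ZMod m)) = bval f (seg a s t) + bval f ((seg a s t)ᶜ) := by
  rw [← bval_union (disjoint_compl_right), Finset.union_compl]

lemma split_sum {V : Type*} [DecidableEq V] [Fintype V] {G : SimpleGraph V}
    {u : V → ℝ} {P : Fin 3 → Finset V}
    (hP : IsSplitOn G Finset.univ 3 P) :
    bval u Finset.univ = bval u (P 0) + bval u (P 1) + bval u (P 2) := by
  obtain ⟨hb, hdisj, hsub, hcov⟩ := hP
  have h01 : Disjoint (P 0) (P 1) := hdisj 0 1 (by decide)
  have h2 : Disjoint (P 0 ∪ P 1) (P 2) := by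
    rw [Finset.disjoint_union_left]
    exact ⟨hdisj 0 2 (by decide), hdisj 1 2 (by decide)⟩
  have huniv : Finset.univ = (P 0 ∪ P 1) ∪ P 2 := by
    apply Finset.Subset.antisymm
    · intro v hv
      obtain ⟨i, hi⟩ := hcov v hv
      have : i = 0 ∨ i = 1 ∨ i = 2 := by omega
      rcases this with rfl | rfl | rfl
      · exact Finset.mem_union_left _ (Finset.mem_union_left _ hi)
      · exact Finset.mem_union_left _ (Finset.mem_union_right _ hi)
      · exact Finset.mem_union_right _ hi
    · intro v _; exact Finset.mem_univ v
  rw [huniv, bval_union h2, bval_union h01]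

lemma mms_nonneg {V : Type*} [DecidableEq V] [Fintype V] {G : SimpleGraph V}
    {u : V → ℝ} (hu : ∀ v, 0 ≤ u v)
    {P : Fin 3 → Finset V} (hP : IsSplitOn G Finset.univ 3 P) :
    0 ≤ mms G 3 u := by
  apply le_csSup
  · refine ⟨bval u Finset.univ, ?_⟩
    rintro q ⟨P', hP', hq⟩
    exact (hq 0).trans (bval_mono hu (Finset.subset_univ _))
  · exact ⟨P, hP, fun i => bval_nonneg hu _⟩

lemma mms_le_third {V : Type*} [DecidableEq V] [Fintype V] {G : SimpleGraph V}
    {u : V → ℝ} (hu : ∀ v, 0 ≤ u v) :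
    mms G 3 u ≤ bval u Finset.univ / 3 := by
  apply Real.sSup_le
  · rintro q ⟨P', hP', hq⟩
    have := split_sum (u := u) hP'
    have h0 := hq 0; have h1 := hq 1; have h2 := hq 2
    linarith
  · have := bval_nonneg hu (Finset.univ : Finset V)
    linarith

lemma exists_ge_piece {V : Type*} [DecidableEq V] [Fintype V] {G : SimpleGraph V}
    {u : V → ℝ} (hu : ∀ v, 0 ≤ u v) {R : Fin 3 → Finset V}
    (hR : IsSplitOn G Finset.univ 3 R) :
    ∃ idx, mms G 3 u ≤ bval u (R idx) := by
  by_contra h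
  push_neg at h
  have hsum := split_sum (u := u) hR
  have hle := mms_le_third (G := G) hu
  have h0 := h 0; have h1 := h 1; have h2 := h 2
  linarith

/-! ### Fin 3 helpers and allocation builder -/

lemma fin3_exhaust {i j : Fin 3} (hij : i ≠ j) :
    ∃ t : Fin 3, t ≠ i ∧ t ≠ j ∧ ∀ a : Fin 3, a = i ∨ a = j ∨ a = t := by
  revert hij
  revert i j
  decide

lemma fin3_two_others (x : Fin 3) :
    ∃ y z : Fin 3, x ≠ y ∧ x ≠ z ∧ y ≠ z ∧ ∀ a : Fin 3, a = x ∨ a = y ∨ a = z := by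
  revert x
  decide

lemma build_alloc {V : Type*} [DecidableEq V] [Fintype V] {G : SimpleGraph V}
    (us : Fin 3 → V → ℝ) (c : ℝ)
    {i j t : Fin 3} (hij : i ≠ j) (hti : t ≠ i) (htj : t ≠ j)
    (hall : ∀ a : Fin 3, a = i ∨ a = j ∨ a = t)
    {D : Fin 3 → Finset V} (hD : IsSplitOn G Finset.univ 3 D)
    {pi pj pt : Fin 3} (h1 : pi ≠ pj) (h2 : pi ≠ pt) (h3 : pj ≠ pt)
    (hvi : c * mms G 3 (us i) ≤ bval (us i) (D pi))
    (hvj : c * mms G 3 (us j) ≤ bval (us j) (D pj))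
    (hvt : c * mms G 3 (us t) ≤ bval (us t) (D pt)) :
    ∃ R : Fin 3 → Finset V, IsSplitOn G Finset.univ 3 R ∧
      ∀ a, c * mms G 3 (us a) ≤ bval (us a) (R a) := by
  classical
  set σ : Fin 3 → Fin 3 := fun a => if a = i then pi else if a = j then pj else pt with hσ
  have hσi : σ i = pi := by simp [hσ]
  have hσj : σ j = pj := by simp [hσ, hij.symm ∘ Eq.symm]; intro h; exact absurd h hij.symm
  have hσt : σ t = pt := by simp [hσ, hti, htj]
  have hσinj : Function.Injective σ := by
    intro x y hxy
    rcases hall x with rfl | rfl | rfl <;> rcases hall y with rfl | rfl | rfl <;>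
      simp only [hσi, hσj, hσt] at hxy <;>
      first
        | rfl
        | (exact absurd hxy h1)
        | (exact absurd hxy h2)
        | (exact absurd hxy h3)
        | (exact absurd hxy.symm h1)
        | (exact absurd hxy.symm h2)
        | (exact absurd hxy.symm h3)
  have hσsurj : Function.Surjective σ := Finite.surjective_of_injective hσinj
  refine ⟨fun a => D (σ a), ?_, ?_⟩
  · obtain ⟨hb, hdisj, hsub, hcov⟩ := hD
    refine ⟨fun a => hb _, fun a b hab => hdisj _ _ (fun h => hab (hσinj h)),
      fun a => hsub _, fun v hv => ?_⟩
    obtain ⟨idx, hidx⟩ := hcov v hv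
    obtain ⟨aidx, ha⟩ := hσsurj idx
    exact ⟨aidx, by simp only []; rw [ha]; exact hidx⟩
  · intro a
    rcases hall a with rfl | rfl | rfl
    · simp only []; rwa [hσi]
    · simp only []; rwa [hσj]
    · simp only []; rwa [hσt]

/-! ### cut splits -/

lemma seg_bundle (hm : 3 ≤ m) (a : ZMod m) {s t : ℕ} (hst : s ≤ t) (ht : t ≤ m) :
    IsBundle (cycleGraph m) (seg a s t) := by
  rw [seg_eq_arc hst ht]; exact arc_bundle hm _ _ (by omega)

lemma compl_seg_bundle (hm : 3 ≤ m) (a : ZMod m) {s t : ℕ} (hst : s ≤ t) (ht : t ≤ m) :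
    IsBundle (cycleGraph m) ((seg a s t)ᶜ) := by
  rw [compl_seg_eq_arc hst ht]; exact arc_bundle hm _ _ (by omega)

def cutSplit (a : ZMod m) (c1 c2 c3 : ℕ) : Fin 3 → Finset (ZMod m) :=
  ![seg a c1 c2, seg a c2 c3, (seg a c1 c3)ᶜ]

lemma cutSplit_isSplit (hm : 3 ≤ m) (a : ZMod m) {c1 c2 c3 : ℕ}
    (h1 : c1 ≤ c2) (h2 : c2 ≤ c3) (h3 : c3 ≤ m) :
    IsSplitOn (cycleGraph m) Finset.univ 3 (cutSplit a c1 c2 c3) := by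
  have hvm : ∀ w : ZMod m, (w - a).val < m := fun w => ZMod.val_lt _
  refine ⟨?_, ?_, fun i => Finset.subset_univ _, ?_⟩
  · intro i
    fin_cases i
    · exact seg_bundle hm a h1 (by omega)
    · exact seg_bundle hm a h2 h3
    · exact compl_seg_bundle hm a (by omega) h3
  · intro i j hij
    fin_cases i <;> fin_cases j <;> simp_all <;>
      rw [Finset.disjoint_left] <;> intro w hw hw' <;>
      simp only [cutSplit, Matrix.cons_val_zero, Matrix.cons_val_one, Matrix.head_cons,
        Matrix.cons_val_two, Matrix.tail_cons, Finset.mem_compl, mem_seg] at hw hw' <;>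
      omega
  · intro v _
    by_cases hA : c1 ≤ (v - a).val ∧ (v - a).val < c2
    · exact ⟨0, by simpa [cutSplit, mem_seg] using hA⟩
    by_cases hB : c2 ≤ (v - a).val ∧ (v - a).val < c3
    · exact ⟨1, by simpa [cutSplit, mem_seg] using hB⟩
    · refine ⟨2, ?_⟩
      simp only [cutSplit, Matrix.cons_val_two, Matrix.tail_cons, Matrix.head_cons,
        Finset.mem_compl, mem_seg]
      omega

/-! ### the hard case -/

def Good (m : ℕ) [NeZero m] (ui uj ut : ZMod m → ℝ) (μi μj μt c : ℝ) : Prop :=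
  ∃ D : Fin 3 → Finset (ZMod m), IsSplitOn (cycleGraph m) Finset.univ 3 D ∧
    ∃ pi pj pt : Fin 3, pi ≠ pj ∧ pi ≠ pt ∧ pj ≠ pt ∧
      c * μi ≤ bval ui (D pi) ∧ c * μj ≤ bval uj (D pj) ∧ c * μt ≤ bval ut (D pt)

lemma mkGood (hm : 3 ≤ m) (a : ZMod m) {c1 c2 c3 : ℕ}
    (h1 : c1 ≤ c2) (h2 : c2 ≤ c3) (h3 : c3 ≤ m)
    {ui uj ut : ZMod m → ℝ} {μi μj μt c : ℝ} (pi pj pt : Fin 3)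
    (hd1 : pi ≠ pj) (hd2 : pi ≠ pt) (hd3 : pj ≠ pt)
    (hvi : c * μi ≤ bval ui (cutSplit a c1 c2 c3 pi))
    (hvj : c * μj ≤ bval uj (cutSplit a c1 c2 c3 pj))
    (hvt : c * μt ≤ bval ut (cutSplit a c1 c2 c3 pt)) :
    Good m ui uj ut μi μj μt c :=
  ⟨_, cutSplit_isSplit hm a h1 h2 h3, pi, pj, pt, hd1, hd2, hd3, hvi, hvj, hvt⟩

lemma cs0 (a : ZMod m) (c1 c2 c3 : ℕ) : cutSplit a c1 c2 c3 0 = seg a c1 c2 := rfl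
lemma cs1 (a : ZMod m) (c1 c2 c3 : ℕ) : cutSplit a c1 c2 c3 1 = seg a c2 c3 := rfl
lemma cs2 (a : ZMod m) (c1 c2 c3 : ℕ) : cutSplit a c1 c2 c3 2 = (seg a c1 c3)ᶜ := rfl

lemma hard_case (hm : 3 ≤ m) {c : ℝ} (hc0 : 0 < c) (hc1 : c ≤ 1)
    {ui uj ut : ZMod m → ℝ} (hui : ∀ v, 0 ≤ ui v) (huj : ∀ v, 0 ≤ uj v) (hut : ∀ v, 0 ≤ ut v)
    {μi μj μt : ℝ} (hμi0 : 0 ≤ μi) (hμj0 : 0 ≤ μj) (hμt0 : 0 ≤ μt)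
    (a : ZMod m) {n q : ℕ} (hn : 1 ≤ n) (hq : 1 ≤ q) (hnq : n + q < m)
    (hjB1 : μj ≤ bval uj (seg a n (n+q))) (hjB2 : μj ≤ bval uj (seg a (n+q) m))
    (hiB1 : bval ui (seg a n (n+q)) < c*μi) (hiB2 : bval ui (seg a (n+q) m) < c*μi)
    (htB1 : bval ut (seg a n (n+q)) < c*μt) (htB2 : bval ut (seg a (n+q) m) < c*μt)
    (htot : 3*μt ≤ bval ut Finset.univ)
    {e1 e2 e3 : ℕ} (he1 : e1 ≤ e2) (he2 : e2 ≤ e3) (he3 : e3 ≤ m)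
    (hA : μi ≤ bval ui (seg a e1 e2)) (hB : μi ≤ bval ui (seg a e2 e3))
    (hW : μi ≤ bval ui ((seg a e1 e3)ᶜ))
    (hint : (c*μi ≤ bval ui (seg a e1 e2 ∩ seg a 0 n)) ∨
            (c*μi ≤ bval ui (seg a e2 e3 ∩ seg a 0 n)) ∨
            (c*μi ≤ bval ui ((seg a e1 e3)ᶜ ∩ seg a 0 n))) :
    Good m ui uj ut μi μj μt c := by
  have hcμi : 0 < c * μi := lt_of_le_of_lt (bval_nonneg hui _) hiB1
  have hcμt : 0 < c * μt := lt_of_le_of_lt (bval_nonneg hut _) htB1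
  have hcμiμi : c * μi ≤ μi := by nlinarith
  have hcμjμj : c * μj ≤ μj := by nlinarith
  have hcμtμt : c * μt ≤ μt := by nlinarith
  obtain ⟨x1, x2, hx12, hx2n, hXval, htag⟩ :
      ∃ x1 x2 : ℕ, x1 ≤ x2 ∧ x2 ≤ n ∧ c*μi ≤ bval ui (seg a x1 x2) ∧
        ((e1 ≤ x1 ∧ x2 ≤ e2) ∨ (e2 ≤ x1) ∨ (x1 = 0 ∧ x2 ≤ e1)) := by
    rcases hint with hintA | hintB | hintW
    · by_cases hc' : e2 ≤ n
      · exact ⟨e1, e2, he1, hc', le_trans hcμiμi hA, Or.inl ⟨le_rfl, le_rfl⟩⟩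
      · push_neg at hc'
        have hcap : seg a e1 e2 ∩ seg a 0 n = seg a e1 n := by
          ext w
          simp only [Finset.mem_inter, mem_seg]
          omega
        rw [hcap] at hintA
        have he1n : e1 ≤ n := by
          by_contra h
          rw [seg_empty' (by omega), bval_empty] at hintA
          linarith
        exact ⟨e1, n, he1n, le_rfl, hintA, Or.inl ⟨le_rfl, by omega⟩⟩
    · by_cases hc' : e3 ≤ n
      · exact ⟨e2, e3, he2, hc', le_trans hcμiμi hB, Or.inr (Or.inl le_rfl)⟩
      · push_neg at hc'
        have hcap : seg a e2 e3 ∩ seg a 0 n = seg a e2 n := by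
          ext w
          simp only [Finset.mem_inter, mem_seg]
          omega
        rw [hcap] at hintB
        have he2n : e2 ≤ n := by
          by_contra h
          rw [seg_empty' (by omega), bval_empty] at hintB
          linarith
        exact ⟨e2, n, he2n, le_rfl, hintB, Or.inr (Or.inl le_rfl)⟩
    · by_cases hc' : e3 ≤ n
      · exact ⟨e2, e3, he2, hc', le_trans hcμiμi hB, Or.inr (Or.inl le_rfl)⟩
      · push_neg at hc'
        have hcap : (seg a e1 e3)ᶜ ∩ seg a 0 n = seg a 0 (min e1 n) := by
          ext w
          simp only [Finset.mem_inter, Finset.mem_compl, mem_seg]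
          omega
        rw [hcap] at hintW
        exact ⟨0, min e1 n, by omega, by omega, hintW,
          Or.inr (Or.inr ⟨rfl, by omega⟩)⟩
  by_cases w3 : c*μt ≤ bval ut (seg a x2 (n+q))
  · refine mkGood hm a (c1 := x1) (c2 := x2) (c3 := n+q) hx12 (by omega) (by omega)
      0 2 1 (by decide) (by decide) (by decide) ?_ ?_ ?_
    · rw [cs0]; exact hXval
    · rw [cs2]
      refine le_trans (le_trans hcμjμj hjB2) (bval_mono huj ?_)
      intro w hw
      rw [Finset.mem_compl, mem_seg] at *
      omega
    · rw [cs1]; exact w3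
  by_cases w4 : c*μt ≤ bval ut ((seg a x1 (n+q))ᶜ)
  · refine mkGood hm a (c1 := x1) (c2 := x2) (c3 := n+q) hx12 (by omega) (by omega)
      0 1 2 (by decide) (by decide) (by decide) ?_ ?_ ?_
    · rw [cs0]; exact hXval
    · rw [cs1]
      exact le_trans (le_trans hcμjμj hjB1) (bval_mono huj (seg_subset' hx2n le_rfl))
    · rw [cs2]; exact w4
  push_neg at w3 w4
  have htX : c*μt ≤ bval ut (seg a x1 x2) := by
    have hdec1 : bval ut (Finset.univ : Finset (ZMod m)) =
        bval ut (seg a x1 (n+q)) + bval ut ((seg a x1 (n+q))ᶜ) := bval_univ_split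
    have hdec2 : bval ut (seg a x1 (n+q)) =
        bval ut (seg a x1 x2) + bval ut (seg a x2 (n+q)) := seg_add_seg hx12 (by omega)
    nlinarith
  rcases htag with ⟨htA1, htA2⟩ | htB | ⟨htW1, htW2⟩
  · by_cases hA1 : e3 ≤ n + q
    · refine mkGood hm a (c1 := 0) (c2 := e2) (c3 := e3) (by omega) he2 (by omega)
        1 2 0 (by decide) (by decide) (by decide) ?_ ?_ ?_
      · rw [cs1]; exact le_trans hcμiμi hB
      · rw [cs2]
        refine le_trans (le_trans hcμjμj hjB2) (bval_mono huj ?_)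
        intro w hw
        rw [Finset.mem_compl, mem_seg] at *
        omega
      · rw [cs0]
        exact le_trans htX (bval_mono hut (seg_subset' (by omega) htA2))
    · push_neg at hA1
      by_cases hA2 : n + q ≤ e2
      · exfalso
        have : bval ui (seg a e2 e3) ≤ bval ui (seg a (n+q) m) :=
          bval_mono hui (seg_subset' hA2 he3)
        linarith
      · push_neg at hA2
        by_cases hA3 : e1 = 0
        · exfalso
          have : bval ui ((seg a e1 e3)ᶜ) ≤ bval ui (seg a (n+q) m) := by
            refine bval_mono hui ?_
            subst hA3
            exact compl_seg_zero_subset (by omega)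
          linarith
        · refine mkGood hm a (c1 := e1) (c2 := n) (c3 := e3) (by omega) (by omega) he3
            2 1 0 (by decide) (by decide) (by decide) ?_ ?_ ?_
          · rw [cs2]; exact le_trans hcμiμi hW
          · rw [cs1]
            exact le_trans (le_trans hcμjμj hjB1) (bval_mono huj (seg_subset' le_rfl (by omega)))
          · rw [cs0]
            exact le_trans htX (bval_mono hut (seg_subset' htA1 hx2n))
  · refine mkGood hm a (c1 := e1) (c2 := e2) (c3 := n) (by omega) (by omega) (by omega)
      0 2 1 (by decide) (by decide) (by decide) ?_ ?_ ?_
    · rw [cs0]; exact le_trans hcμiμi hA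
    · rw [cs2]
      refine le_trans (le_trans hcμjμj hjB1) (bval_mono huj ?_)
      intro w hw
      rw [Finset.mem_compl, mem_seg] at *
      omega
    · rw [cs1]
      exact le_trans htX (bval_mono hut (seg_subset' htB hx2n))
  · by_cases hW1 : e2 ≤ n + q
    · refine mkGood hm a (c1 := 0) (c2 := e1) (c3 := e2) (by omega) he1 (by omega)
        1 2 0 (by decide) (by decide) (by decide) ?_ ?_ ?_
      · rw [cs1]; exact le_trans hcμiμi hA
      · rw [cs2]
        refine le_trans (le_trans hcμjμj hjB2) (bval_mono huj ?_)
        intro w hw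
        rw [Finset.mem_compl, mem_seg] at *
        omega
      · rw [cs0]
        refine le_trans htX (bval_mono hut ?_)
        rw [htW1]
        exact seg_subset' le_rfl htW2
    · push_neg at hW1
      exfalso
      have : bval ui (seg a e2 e3) ≤ bval ui (seg a (n+q) m) :=
        bval_mono hui (seg_subset' (by omega) he3)
      linarith

lemma cast_sub_m {z : ℕ} (h : m ≤ z) : ((z - m : ℕ) : ZMod m) = (z : ZMod m) := by
  have : z = (z - m) + m := by omega
  conv_rhs => rw [this]
  push_cast
  rw [ZMod.natCast_self]
  ring

end Stmt12

/-- Lemma on a valuable intersection of bundles from two mms-splits: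
if the intersection of a bundle of agent `i`'s mms-split with a bundle of agent `j`'s
mms-split is worth at least `c·mms(i)` to agent `i`, a `c`-sufficient allocation
exists for the three agents. -/
theorem stmt12 (m : ℕ) [NeZero m] (hm : 3 ≤ m) (c : ℝ) (hc0 : 0 < c) (hc1 : c ≤ 1)
    (us : Fin 3 → ZMod m → ℝ) (hus : ∀ i v, 0 ≤ us i v)
    (i j : Fin 3) (hij : i ≠ j)
    (P Q : Fin 3 → Finset (ZMod m))
    (hP : IsSplitOn (cycleGraph m) Finset.univ 3 P)
    (hPmms : ∀ k, mms (cycleGraph m) 3 (us i) ≤ bval (us i) (P k))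
    (hQ : IsSplitOn (cycleGraph m) Finset.univ 3 Q)
    (hQmms : ∀ k, mms (cycleGraph m) 3 (us j) ≤ bval (us j) (Q k))
    (k l : Fin 3)
    (hint : c * mms (cycleGraph m) 3 (us i) ≤ bval (us i) (P k ∩ Q l)) :
    ∃ R : Fin 3 → Finset (ZMod m), IsSplitOn (cycleGraph m) Finset.univ 3 R ∧
      ∀ a, c * mms (cycleGraph m) 3 (us a) ≤ bval (us a) (R a) := by
  
  classical
  obtain ⟨t, hti, htj, hall⟩ := Stmt12.fin3_exhaust hij
  have hμi0 : 0 ≤ mms (cycleGraph m) 3 (us i) := Stmt12.mms_nonneg (hus i) hP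
  have hμj0 : 0 ≤ mms (cycleGraph m) 3 (us j) := Stmt12.mms_nonneg (hus j) hQ
  have hμt0 : 0 ≤ mms (cycleGraph m) 3 (us t) := Stmt12.mms_nonneg (hus t) hP
  have hcc : ∀ x : ℝ, 0 ≤ x → c * x ≤ x := fun x hx => by nlinarith
  suffices hGood : Stmt12.Good m (us i) (us j) (us t)
      (mms (cycleGraph m) 3 (us i)) (mms (cycleGraph m) 3 (us j))
      (mms (cycleGraph m) 3 (us t)) c by
    obtain ⟨D, hD, pi, pj, pt, h1, h2, h3, hvi, hvj, hvt⟩ := hGood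
    exact Stmt12.build_alloc us c hij hti htj hall hD h1 h2 h3 hvi hvj hvt
  have hintQl : c * mms (cycleGraph m) 3 (us i) ≤ bval (us i) (Q l) :=
    le_trans hint (Stmt12.bval_mono (hus i) Finset.inter_subset_right)
  obtain ⟨l₁, l₂, hl1, hl2, hl12, hQall⟩ := Stmt12.fin3_two_others l
  -- Easy case 1 : t is happy with a non-special Q-bundle
  by_cases hE1 : c * mms (cycleGraph m) 3 (us t) ≤ bval (us t) (Q l₁) ∨
      c * mms (cycleGraph m) 3 (us t) ≤ bval (us t) (Q l₂)
  · rcases hE1 with h | h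
    · exact ⟨Q, hQ, l, l₂, l₁, hl2, hl1, Ne.symm hl12,
        hintQl, le_trans (hcc _ hμj0) (hQmms l₂), h⟩
    · exact ⟨Q, hQ, l, l₁, l₂, hl1, hl2, hl12,
        hintQl, le_trans (hcc _ hμj0) (hQmms l₁), h⟩
  push_neg at hE1
  obtain ⟨htQ1, htQ2⟩ := hE1
  -- Easy case 2 : i is happy with a non-special Q-bundle
  by_cases hE2 : c * mms (cycleGraph m) 3 (us i) ≤ bval (us i) (Q l₁) ∨
      c * mms (cycleGraph m) 3 (us i) ≤ bval (us i) (Q l₂)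
  · obtain ⟨lt, hlt⟩ := Stmt12.exists_ge_piece (hus t) hQ
    have hltc : c * mms (cycleGraph m) 3 (us t) ≤ bval (us t) (Q lt) :=
      le_trans (hcc _ hμt0) hlt
    rcases hQall lt with rfl | rfl | rfl
    · rcases hE2 with h | h
      · exact ⟨Q, hQ, l₁, l₂, lt, hl12, Ne.symm hl1, Ne.symm hl2,
          h, le_trans (hcc _ hμj0) (hQmms l₂), hltc⟩
      · exact ⟨Q, hQ, l₂, l₁, lt, Ne.symm hl12, Ne.symm hl2, Ne.symm hl1,
          h, le_trans (hcc _ hμj0) (hQmms l₁), hltc⟩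
    · exact ⟨Q, hQ, l, l₂, lt, hl2, hl1, Ne.symm hl12,
        hintQl, le_trans (hcc _ hμj0) (hQmms l₂), hltc⟩
    · exact ⟨Q, hQ, l, l₁, lt, hl1, hl2, hl12,
        hintQl, le_trans (hcc _ hμj0) (hQmms l₁), hltc⟩
  push_neg at hE2
  obtain ⟨hiQ1, hiQ2⟩ := hE2
  -- Easy case 3 : μj ≤ 0
  by_cases hμjpos : 0 < mms (cycleGraph m) 3 (us j)
  swap
  · push_neg at hμjpos
    obtain ⟨kt, hkt⟩ := Stmt12.exists_ge_piece (hus t) hP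
    obtain ⟨k₂, k₃, hk2, hk3, hk23, hPall⟩ := Stmt12.fin3_two_others kt
    refine ⟨P, hP, k₂, k₃, kt, hk23, Ne.symm hk2, Ne.symm hk3,
      le_trans (hcc _ hμi0) (hPmms k₂), ?_, le_trans (hcc _ hμt0) hkt⟩
    calc c * mms (cycleGraph m) 3 (us j) ≤ c * 0 := by nlinarith
    _ ≤ bval (us j) (P k₃) := by
        rw [mul_zero]
        exact Stmt12.bval_nonneg (hus j) _
  -- HARD CASE
  have hcμi : 0 < c * mms (cycleGraph m) 3 (us i) :=
    lt_of_le_of_lt (Stmt12.bval_nonneg (hus i) _) hiQ1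
  have hcμt : 0 < c * mms (cycleGraph m) 3 (us t) :=
    lt_of_le_of_lt (Stmt12.bval_nonneg (hus t) _) htQ1
  have hμipos : 0 < mms (cycleGraph m) 3 (us i) := by nlinarith
  -- Q geometry
  have hQlne : (Q l).Nonempty :=
    Stmt12.nonempty_of_bval_pos (lt_of_lt_of_le hcμi hintQl)
  obtain ⟨a, n, hn1, hnm, hQleq⟩ := Stmt12.bundle_to_arc (Q l) (hQ.1 l) hQlne
  have hQ1ne : (Q l₁).Nonempty :=
    Stmt12.nonempty_of_bval_pos (lt_of_lt_of_le hμjpos (hQmms l₁))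
  have hQ2ne : (Q l₂).Nonempty :=
    Stmt12.nonempty_of_bval_pos (lt_of_lt_of_le hμjpos (hQmms l₂))
  have hnm' : n < m := by
    rcases lt_or_eq_of_le hnm with h | h
    · exact h
    · exfalso
      obtain ⟨w, hw⟩ := hQ1ne
      have hwQl : w ∈ Q l := by
        rw [hQleq, Stmt12.mem_arc hnm, h]
        exact ZMod.val_lt _
      exact (Finset.disjoint_left.1 (hQ.2.1 l l₁ hl1) hwQl) hw
  have hcomplQ : Q l₁ ∪ Q l₂ = Stmt12.arc (a + (n : ZMod m)) (m - n) := by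
    have hc1 : (Stmt12.arc a n)ᶜ = Stmt12.arc (a + (n:ZMod m)) (m - n) := by
      rw [Stmt12.arc_eq_seg hnm, Stmt12.compl_seg_eq_arc (by omega) hnm]
      congr 1 <;> omega
    rw [← hc1]
    ext w
    simp only [Finset.mem_union, Finset.mem_compl]
    constructor
    · rintro (h | h) hwl
      · rw [← hQleq] at hwl
        exact (Finset.disjoint_left.1 (hQ.2.1 l l₁ hl1) hwl) h
      · rw [← hQleq] at hwl
        exact (Finset.disjoint_left.1 (hQ.2.1 l l₂ hl2) hwl) h
    · intro h
      obtain ⟨idx, hidx⟩ := hQ.2.2.2 w (Finset.mem_univ w)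
      rcases hQall idx with rfl | rfl | rfl
      · exact absurd (hQleq ▸ hidx) h
      · exact Or.inl hidx
      · exact Or.inr hidx
  obtain ⟨q, hq1, hq2, hbrQ⟩ := Stmt12.ps hm (by omega) (hQ.1 l₁) (hQ.1 l₂) hQ1ne hQ2ne
    (hQ.2.1 l₁ l₂ hl12) hcomplQ
  have hnq : n + q < m := by omega
  have hseg1 : Stmt12.arc (a + (n:ZMod m)) q = Stmt12.seg a n (n + q) := by
    rw [Stmt12.arc_as_seg a (by omega)]
  have hseg2 : Stmt12.arc (a + (n:ZMod m) + (q:ZMod m)) (m - n - q) = Stmt12.seg a (n+q) m := by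
    have : a + (n:ZMod m) + (q:ZMod m) = a + (((n+q : ℕ)) : ZMod m) := by push_cast; ring
    rw [this]
    have := Stmt12.arc_as_seg (m := m) a (s := n+q) (l := m - n - q) (by omega)
    rw [this]
    congr 1 <;> omega
  rw [hseg1, hseg2] at hbrQ
  obtain ⟨hjB1, hjB2, hiB1, hiB2, htB1, htB2⟩ :
      (mms (cycleGraph m) 3 (us j) ≤ bval (us j) (Stmt12.seg a n (n+q))) ∧
      (mms (cycleGraph m) 3 (us j) ≤ bval (us j) (Stmt12.seg a (n+q) m)) ∧
      (bval (us i) (Stmt12.seg a n (n+q)) < c * mms (cycleGraph m) 3 (us i)) ∧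
      (bval (us i) (Stmt12.seg a (n+q) m) < c * mms (cycleGraph m) 3 (us i)) ∧
      (bval (us t) (Stmt12.seg a n (n+q)) < c * mms (cycleGraph m) 3 (us t)) ∧
      (bval (us t) (Stmt12.seg a (n+q) m) < c * mms (cycleGraph m) 3 (us t)) := by
    rcases hbrQ with ⟨h1, h2⟩ | ⟨h1, h2⟩
    · exact ⟨h1 ▸ hQmms l₁, h2 ▸ hQmms l₂, h1 ▸ hiQ1, h2 ▸ hiQ2, h1 ▸ htQ1, h2 ▸ htQ2⟩
    · exact ⟨h1 ▸ hQmms l₂, h2 ▸ hQmms l₁, h1 ▸ hiQ2, h2 ▸ hiQ1, h1 ▸ htQ2, h2 ▸ htQ1⟩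
  have htot : 3 * mms (cycleGraph m) 3 (us t) ≤ bval (us t) Finset.univ := by
    have := Stmt12.mms_le_third (G := cycleGraph m) (hus t)
    linarith
  -- P geometry
  have hPkne : (P k).Nonempty :=
    Stmt12.nonempty_of_bval_pos (lt_of_lt_of_le hμipos (hPmms k))
  obtain ⟨v1, k1, hk11, hk1m, hPkeq⟩ := Stmt12.bundle_to_arc (P k) (hP.1 k) hPkne
  obtain ⟨k₂, k₃, hk2, hk3, hk23, hPall⟩ := Stmt12.fin3_two_others k
  have hPk2ne : (P k₂).Nonempty :=
    Stmt12.nonempty_of_bval_pos (lt_of_lt_of_le hμipos (hPmms k₂))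
  have hPk3ne : (P k₃).Nonempty :=
    Stmt12.nonempty_of_bval_pos (lt_of_lt_of_le hμipos (hPmms k₃))
  have hk1m' : k1 < m := by
    rcases lt_or_eq_of_le hk1m with h | h
    · exact h
    · exfalso
      obtain ⟨w, hw⟩ := hPk2ne
      have hwPk : w ∈ P k := by
        rw [hPkeq, Stmt12.mem_arc hk1m, h]
        exact ZMod.val_lt _
      exact (Finset.disjoint_left.1 (hP.2.1 k k₂ hk2) hwPk) hw
  have hcomplP : P k₂ ∪ P k₃ = Stmt12.arc (v1 + (k1 : ZMod m)) (m - k1) := by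
    have hc1 : (Stmt12.arc v1 k1)ᶜ = Stmt12.arc (v1 + (k1:ZMod m)) (m - k1) := by
      rw [Stmt12.arc_eq_seg hk1m, Stmt12.compl_seg_eq_arc (by omega) hk1m]
      congr 1 <;> omega
    rw [← hc1]
    ext w
    simp only [Finset.mem_union, Finset.mem_compl]
    constructor
    · rintro (h | h) hwl
      · rw [← hPkeq] at hwl
        exact (Finset.disjoint_left.1 (hP.2.1 k k₂ hk2) hwl) h
      · rw [← hPkeq] at hwl
        exact (Finset.disjoint_left.1 (hP.2.1 k k₃ hk3) hwl) h
    · intro h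
      obtain ⟨idx, hidx⟩ := hP.2.2.2 w (Finset.mem_univ w)
      rcases hPall idx with rfl | rfl | rfl
      · exact absurd (hPkeq ▸ hidx) h
      · exact Or.inl hidx
      · exact Or.inr hidx
  obtain ⟨k2l, hk2l1, hk2l2, hbrP⟩ := Stmt12.ps hm (by omega) (hP.1 k₂) (hP.1 k₃)
    hPk2ne hPk3ne (hP.2.1 k₂ k₃ hk23) hcomplP
  have harc2 : ∃ idx, P idx = Stmt12.arc (v1 + (k1:ZMod m)) k2l := by
    rcases hbrP with ⟨h, _⟩ | ⟨h, _⟩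
    · exact ⟨k₂, h⟩
    · exact ⟨k₃, h⟩
  have harc3 : ∃ idx, P idx = Stmt12.arc (v1 + (k1:ZMod m) + (k2l:ZMod m)) (m - k1 - k2l) := by
    rcases hbrP with ⟨_, h⟩ | ⟨_, h⟩
    · exact ⟨k₃, h⟩
    · exact ⟨k₂, h⟩
  set t1 := (v1 - a).val with ht1def
  have ht1m : t1 < m := ZMod.val_lt _
  have hv1 : v1 = a + ((t1 : ℕ) : ZMod m) := by
    rw [ht1def, ZMod.natCast_val, ZMod.cast_id]; ring
  have hbase2 : v1 + (k1:ZMod m) = a + (((t1 + k1 : ℕ)) : ZMod m) := by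
    rw [hv1]; push_cast; ring
  have hbase3 : v1 + (k1:ZMod m) + (k2l:ZMod m) = a + (((t1 + k1 + k2l : ℕ)) : ZMod m) := by
    rw [hv1]; push_cast; ring
  have hQlseg : Q l = Stmt12.seg a 0 n := by
    rw [hQleq, Stmt12.arc_eq_seg hnm]
  have hintP : c * mms (cycleGraph m) 3 (us i) ≤ bval (us i) (P k ∩ Stmt12.seg a 0 n) := by
    rw [← hQlseg]; exact hint
  -- rotation cases
  rcases Nat.lt_or_ge m (t1 + k1) with hC3 | hC12
  · -- case C3 : P k wraps
    have he1e2 : t1 + k1 - m ≤ t1 + k1 + k2l - m := by omega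
    have hPkW : P k = (Stmt12.seg a (t1 + k1 - m) t1)ᶜ := by
      rw [hPkeq, hv1, Stmt12.arc_as_compl a (by omega) hk1m (by omega)]
    obtain ⟨idxA, hidxA⟩ := harc2
    have hAeq : P idxA = Stmt12.seg a (t1 + k1 - m) (t1 + k1 + k2l - m) := by
      rw [hidxA, hbase2, ← Stmt12.cast_sub_m (z := t1 + k1) (by omega),
        Stmt12.arc_as_seg a (by omega)]
      congr 1 <;> omega
    obtain ⟨idxB, hidxB⟩ := harc3
    have hBeq : P idxB = Stmt12.seg a (t1 + k1 + k2l - m) t1 := by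
      rw [hidxB, hbase3, ← Stmt12.cast_sub_m (z := t1 + k1 + k2l) (by omega),
        Stmt12.arc_as_seg a (by omega)]
      congr 1 <;> omega
    refine Stmt12.hard_case hm hc0 hc1 (hus i) (hus j) (hus t) hμi0 hμj0 hμt0 a hn1 hq1 hnq
      hjB1 hjB2 hiB1 hiB2 htB1 htB2 htot
      (e1 := t1 + k1 - m) (e2 := t1 + k1 + k2l - m) (e3 := t1)
      he1e2 (by omega) (by omega)
      (hAeq ▸ hPmms idxA) (hBeq ▸ hPmms idxB) (hPkW ▸ hPmms k)
      (Or.inr (Or.inr (hPkW ▸ hintP)))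
  rcases Nat.lt_or_ge m (t1 + k1 + k2l) with hC2 | hC1
  · -- case C2
    have hPkB : P k = Stmt12.seg a t1 (t1 + k1) := by
      rw [hPkeq, hv1, Stmt12.arc_as_seg a (by omega)]
    obtain ⟨idxA, hidxA⟩ := harc3
    have hAeq : P idxA = Stmt12.seg a (t1 + k1 + k2l - m) t1 := by
      rw [hidxA, hbase3, ← Stmt12.cast_sub_m (z := t1 + k1 + k2l) (by omega),
        Stmt12.arc_as_seg a (by omega)]
      congr 1 <;> omega
    obtain ⟨idxW, hidxW⟩ := harc2
    have hWeq : P idxW = (Stmt12.seg a (t1 + k1 + k2l - m) (t1 + k1))ᶜ := by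
      rw [hidxW, hbase2, Stmt12.arc_as_compl a (by omega) (by omega) (by omega)]
    exact Stmt12.hard_case hm hc0 hc1 (hus i) (hus j) (hus t) hμi0 hμj0 hμt0 a hn1 hq1 hnq
      hjB1 hjB2 hiB1 hiB2 htB1 htB2 htot
      (e1 := t1 + k1 + k2l - m) (e2 := t1) (e3 := t1 + k1)
      (by omega) (by omega) (by omega)
      (hAeq ▸ hPmms idxA) (hPkB ▸ hPmms k) (hWeq ▸ hPmms idxW)
      (Or.inr (Or.inl (hPkB ▸ hintP)))
  · -- case C1
    have hPkA : P k = Stmt12.seg a t1 (t1 + k1) := by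
      rw [hPkeq, hv1, Stmt12.arc_as_seg a (by omega)]
    obtain ⟨idxB, hidxB⟩ := harc2
    have hBeq : P idxB = Stmt12.seg a (t1 + k1) (t1 + k1 + k2l) := by
      rw [hidxB, hbase2, Stmt12.arc_as_seg a (by omega)]
    obtain ⟨idxW, hidxW⟩ := harc3
    have hWeq : P idxW = (Stmt12.seg a t1 (t1 + k1 + k2l))ᶜ := by
      rw [hidxW, hbase3, Stmt12.arc_as_compl a (by omega) (by omega) (by omega)]
      congr 2 <;> omega
    exact Stmt12.hard_case hm hc0 hc1 (hus i) (hus j) (hus t) hμi0 hμj0 hμt0 a hn1 hq1 hnq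
      hjB1 hjB2 hiB1 hiB2 htB1 htB2 htot
      (e1 := t1) (e2 := t1 + k1) (e3 := t1 + k1 + k2l)
      (by omega) (by omega) (by omega)
      (hPkA ▸ hPmms k) (hBeq ▸ hPmms idxB) (hWeq ▸ hPmms idxW)
      (Or.inl (hPkA ▸ hintP))
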